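/- Let α: S → T and β: T → U be surjective homomorphisms of finite semigroups. If β ∘ α is injective on every regular R-class of S, then β is injective on every regular R-class of T. (Together with the easy converse direction, composition of 1:1regR maps is 1:1regR.) -/
import Mathlib


/-- Green's R-preorder: `a ≤_R b` iff `a S¹ ⊆ b S¹`. -/
def rLe {S : Type*} [Semigroup S] (a b : S) : Prop := a = b ∨ ∃ x, a = b * x

/-- Green's R-equivalence. -/
def rEquiv {S : Type*} [Semigroup S] (a b : S) : Prop := rLe a b ∧ rLe b a

/-- `spow x n = x^(n+1)` in a semigroup. -/
private def spow {S : Type*} [Semigroup S] (x : S) : ℕ → S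
  | 0 => x
  | n+1 => spow x n * x

private lemma spow_add {S : Type*} [Semigroup S] (x : S) (m n : ℕ) :
    spow x (m + n + 1) = spow x m * spow x n := by
  induction n with
  | zero => rfl
  | succ n ih =>
    show spow x (m + n + 1) * x = _
    rw [ih, mul_assoc]
    rfl

private lemma spow_hom {S T : Type*} [Semigroup S] [Semigroup T] (α : S → T)
    (hα : ∀ a b : S, α (a * b) = α a * α b) (x : S) (n : ℕ) :
    α (spow x n) = spow (α x) n := by
  induction n with
  | zero => rfl
  | succ n ih => show α (spow x n * x) = _; rw [hα, ih]; rfl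

private lemma spow_idem_fix {S : Type*} [Semigroup S] {e : S} (he : e * e = e) (n : ℕ) :
    spow e n = e := by
  induction n with
  | zero => rfl
  | succ n ih => show spow e n * e = e; rw [ih, he]

private lemma spow_absorb_right {S : Type*} [Semigroup S] {x g : S} (h : x * g = x) (n : ℕ) :
    spow x n * g = spow x n := by
  induction n with
  | zero => exact h
  | succ n _ =>
    show spow x n * x * g = spow x n * x
    rw [mul_assoc, h]

private lemma spow_period {S : Type*} [Semigroup S] {x : S} {i d : ℕ}
    (h : spow x (i + d) = spow x i) : ∀ m, spow x (i + d + m) = spow x (i + m) := by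
  intro m
  induction m with
  | zero => exact h
  | succ m ih =>
    show spow x (i + d + m) * x = spow x (i + m) * x
    rw [ih]

private lemma spow_period' {S : Type*} [Semigroup S] {x : S} {i d : ℕ}
    (h : spow x (i + d) = spow x i) : ∀ k m, spow x (i + m + k * d) = spow x (i + m) := by
  intro k
  induction k with
  | zero => intro m; rw [Nat.zero_mul, Nat.add_zero]
  | succ k ih =>
    intro m
    have h1 : i + m + (k + 1) * d = i + d + (m + k * d) := by ring
    rw [h1, spow_period h (m + k * d), ← Nat.add_assoc, ih m]

/-- In a finite semigroup, some power `x^(N+1)` with `N ≥ 1` is idempotent. -/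
private lemma exists_idem_spow {S : Type*} [Semigroup S] [Fintype S] (x : S) :
    ∃ N : ℕ, 1 ≤ N ∧ spow x N * spow x N = spow x N := by
  obtain ⟨i, j, hne, hij⟩ := Finite.exists_ne_map_eq_of_infinite (spow x)
  obtain ⟨i, d, hd, h⟩ : ∃ i d : ℕ, 1 ≤ d ∧ spow x (i + d) = spow x i := by
    rcases Nat.lt_or_ge i j with hlt | hge
    · exact ⟨i, j - i, by omega, by rw [show i + (j - i) = j by omega]; exact hij.symm⟩
    · have hlt : j < i := by omega
      exact ⟨j, i - j, by omega, by rw [show j + (i - j) = i by omega]; exact hij⟩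
  have hM : i + 2 ≤ (i + 2) * d := Nat.le_mul_of_pos_right (i + 2) hd
  obtain ⟨M, hMeq⟩ : ∃ M, (i + 2) * d = M := ⟨_, rfl⟩
  rw [hMeq] at hM
  refine ⟨M - 1, by omega, ?_⟩
  have hkey := spow_period' h (i + 2) (M - 1 - i)
  rw [hMeq] at hkey
  have e1 : i + (M - 1 - i) + M = (M - 1) + (M - 1) + 1 := by omega
  have e2 : i + (M - 1 - i) = M - 1 := by omega
  rw [e1, e2] at hkey
  rw [← spow_add, hkey]

theorem stmt16 {S T U : Type*} [Semigroup S] [Fintype S] [Semigroup T] [Fintype T]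
    [Semigroup U] [Fintype U]
    (α : S → T) (hα : ∀ a b : S, α (a * b) = α a * α b) (hαs : Function.Surjective α)
    (β : T → U) (hβ : ∀ a b : T, β (a * b) = β a * β b) (hβs : Function.Surjective β)
    (hcomp : ∀ s₁ s₂ : S, (∃ e : S, e * e = e ∧ rEquiv e s₁) →
      rEquiv s₁ s₂ → β (α s₁) = β (α s₂) → s₁ = s₂) :
    ∀ t₁ t₂ : T, (∃ e : T, e * e = e ∧ rEquiv e t₁) →
      rEquiv t₁ t₂ → β t₁ = β t₂ → t₁ = t₂ := by
  rintro t₁ t₂ ⟨e, he, hle1, hle2⟩ ⟨hle3, hle4⟩ hbt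
  -- multipliers in T
  obtain ⟨p, hp⟩ : ∃ p, t₁ = e * p := by
    rcases hle2 with h | ⟨z, hz⟩
    · exact ⟨e, by rw [h, he]⟩
    · exact ⟨z, hz⟩
  obtain ⟨q, hq⟩ : ∃ q, e = t₁ * q := by
    rcases hle1 with h | ⟨z, hz⟩
    · exact ⟨e, by rw [← h, he]⟩
    · exact ⟨z, hz⟩
  have het₁ : e * t₁ = t₁ := by rw [hp, ← mul_assoc, he]
  obtain ⟨v, hv⟩ : ∃ v, t₂ = t₁ * v := by
    rcases hle4 with h | ⟨z, hz⟩
    · exact ⟨q * t₁, by rw [h, ← mul_assoc, ← hq, het₁]⟩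
    · exact ⟨z, hz⟩
  obtain ⟨u, hu⟩ : ∃ u, t₁ = t₂ * u := by
    rcases hle3 with h | ⟨z, hz⟩
    · exact ⟨q * t₁, by rw [← h, ← mul_assoc, ← hq, het₁]⟩
    · exact ⟨z, hz⟩
  -- lifts
  obtain ⟨s₀, hs₀⟩ := hαs e
  obtain ⟨p₀, hp₀⟩ := hαs p
  obtain ⟨q₀, hq₀⟩ := hαs q
  obtain ⟨v₀, hv₀⟩ := hαs v
  obtain ⟨u₀, hu₀⟩ := hαs u
  -- idempotent lift of e
  obtain ⟨N₀, _, hfidem0⟩ := exists_idem_spow s₀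
  obtain ⟨f, hfdef⟩ : ∃ f, f = spow s₀ N₀ := ⟨_, rfl⟩
  have hfidem : f * f = f := by rw [hfdef]; exact hfidem0
  have hαf : α f = e := by rw [hfdef, spow_hom α hα, hs₀, spow_idem_fix he]
  -- the key element x
  obtain ⟨A, hA⟩ : ∃ A, A = p₀ * (v₀ * (u₀ * q₀)) := ⟨_, rfl⟩
  obtain ⟨x, hx⟩ : ∃ x, x = f * A * f := ⟨_, rfl⟩
  have hαx : α x = e := by
    rw [hx, hα, hα, hαf, hA, hα, hα, hα, hp₀, hv₀, hu₀, hq₀]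
    rw [← mul_assoc, ← mul_assoc, ← mul_assoc, ← hp, ← hv, ← hu, ← hq, he]
  have hxf : x * f = x := by rw [hx, mul_assoc, hfidem]
  obtain ⟨N, hN1, hNidem0⟩ := exists_idem_spow x
  obtain ⟨f', hf'⟩ : ∃ f', f' = spow x N := ⟨_, rfl⟩
  have hNidem : f' * f' = f' := by rw [hf']; exact hNidem0
  have hαf' : α f' = e := by rw [hf', spow_hom α hα, hαx, spow_idem_fix he]
  have hf'f : f' * f = f' := by rw [hf']; exact spow_absorb_right hxf N
  -- the lifted pair
  obtain ⟨s₂, hs₂⟩ : ∃ s₂, s₂ = f' * (p₀ * v₀) := ⟨_, rfl⟩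
  obtain ⟨s₁, hs₁⟩ : ∃ s₁, s₁ = s₂ * u₀ := ⟨_, rfl⟩
  have hαs₂ : α s₂ = t₂ := by
    rw [hs₂, hα, hαf', hα, hp₀, hv₀, ← mul_assoc, ← hp, ← hv]
  have hαs₁ : α s₁ = t₁ := by rw [hs₁, hα, hαs₂, hu₀, ← hu]
  -- s₁ reaches back to f'
  have hstep : s₁ * (q₀ * f) = spow x (N + 1) := by
    calc s₁ * (q₀ * f) = f' * (A * f) := by
          rw [hs₁, hs₂, hA]
          simp only [mul_assoc]
      _ = f' * f * (A * f) := by rw [hf'f]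
      _ = f' * (f * A * f) := by simp only [mul_assoc]
      _ = f' * x := by rw [hx]
      _ = spow x (N + 1) := by rw [hf']; exact (spow_add x N 0).symm
  have hback : s₁ * (q₀ * f * spow x (N - 1)) = f' := by
    rw [← mul_assoc, hstep]
    have h4 : spow x (N + 1) * spow x (N - 1) = spow x (N + 1 + (N - 1) + 1) :=
      (spow_add x (N + 1) (N - 1)).symm
    have h5 : N + 1 + (N - 1) + 1 = N + N + 1 := by omega
    rw [h4, h5, spow_add x N N, hNidem0, ← hf']
  -- Green relations in S
  have hreg : rEquiv f' s₁ := by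
    constructor
    · exact Or.inr ⟨q₀ * f * spow x (N - 1), hback.symm⟩
    · exact Or.inr ⟨p₀ * v₀ * u₀, by rw [hs₁, hs₂, mul_assoc]⟩
  have hr12 : rEquiv s₁ s₂ := by
    constructor
    · exact Or.inr ⟨u₀, hs₁⟩
    · exact Or.inr ⟨q₀ * f * spow x (N - 1) * (p₀ * v₀), by rw [← mul_assoc, hback, ← hs₂]⟩
  have hbs : β (α s₁) = β (α s₂) := by rw [hαs₁, hαs₂]; exact hbt
  have h12 := hcomp s₁ s₂ ⟨f', hNidem, hreg⟩ hr12 hbs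
  rw [← hαs₁, ← hαs₂, h12]
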